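/- arXiv:1910.10589 — 4 statements merged into one kernel-verified Lean document; each statement's English description precedes it below -/
import Mathlib

section
/- Invariance of the detrended walk to polynomial trend: let X : ℕ → ℝ, let p be a polynomial of degree at most ν, and set Y_t := X_t + p(t). Define the integrated signals R^X_t := ∑_{j=1}^t X_j and R^Y_t := ∑_{j=1}^t Y_j. Then for each box starting at i, the residual vectors of a least-squares fit by polynomials of degree ν+1 satisfy Q_{m+1}(R^Y_i, …, R^Y_{m+i})ᵀ = Q_{m+1}(R^X_i, …, R^X_{m+i})ᵀ, where Q_{m+1} := I − D(DᵀD)⁻¹Dᵀ and D is the (m+1)×(ν+2) Vandermonde-type design matrix with columns (1, t, …, t^{ν+1}) for t = 1,…,m+1. -/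
open Matrix BigOperators Polynomial

/-- The Vandermonde-type design matrix with columns `(1, t, …, t^{ν+1})` for
`t = 1, …, m+1`. -/
def designMat (m ν : ℕ) : Matrix (Fin (m + 1)) (Fin (ν + 2)) ℝ :=
  fun t j => ((t : ℝ) + 1) ^ (j : ℕ)

/-- Faulhaber: the power sum is a polynomial of degree ≤ ℓ+1. -/
lemma faulhaber_poly (ℓ : ℕ) : ∃ q : Polynomial ℝ, q.natDegree ≤ ℓ + 1 ∧
    ∀ n : ℕ, q.eval (n : ℝ) = ∑ j ∈ Finset.range n, (j : ℝ) ^ ℓ := by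
  set qQ : Polynomial ℚ := ∑ i ∈ Finset.range (ℓ + 1),
      Polynomial.C (_root_.bernoulli i * ((ℓ + 1).choose i) / (ℓ + 1)) * Polynomial.X ^ (ℓ + 1 - i)
    with hqQ
  refine ⟨qQ.map (algebraMap ℚ ℝ), ?_, ?_⟩
  · refine Polynomial.natDegree_map_le.trans ?_
    refine Polynomial.natDegree_sum_le_of_forall_le _ _ fun i _ => ?_
    refine (Polynomial.natDegree_C_mul_le _ _).trans ?_
    simp [Nat.sub_le]
  · intro n
    have h2 : qQ.eval (n : ℚ) = ∑ j ∈ Finset.range n, (j : ℚ) ^ ℓ := by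
      rw [sum_range_pow, hqQ, Polynomial.eval_finset_sum]
      refine Finset.sum_congr rfl fun k _ => ?_
      simp only [Polynomial.eval_mul, Polynomial.eval_C, Polynomial.eval_pow, Polynomial.eval_X]
      ring
    rw [show ((n : ℝ)) = algebraMap ℚ ℝ ((n : ℚ)) by simp,
      Polynomial.eval_map, Polynomial.eval₂_at_apply, h2]
    push_cast
    rfl

/-- The sum of a polynomial over `Icc 1 n` is a polynomial of degree ≤ ν + 1. -/
lemma sum_poly_Icc (p : Polynomial ℝ) (ν : ℕ) (hp : p.natDegree ≤ ν) :
    ∃ q : Polynomial ℝ, q.natDegree ≤ ν + 1 ∧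
      ∀ n : ℕ, q.eval (n : ℝ) = ∑ j ∈ Finset.Icc 1 n, p.eval (j : ℝ) := by
  choose Q hQd hQe using faulhaber_poly
  refine ⟨∑ k ∈ Finset.range (ν + 1),
      Polynomial.C (p.coeff k) * ((Q k).comp (Polynomial.X + 1) - Polynomial.C ((0 : ℝ) ^ k)),
      ?_, ?_⟩
  · refine Polynomial.natDegree_sum_le_of_forall_le _ _ fun k hk => ?_
    refine (Polynomial.natDegree_C_mul_le _ _).trans ?_
    refine (Polynomial.natDegree_sub_le _ _).trans ?_
    rw [max_le_iff]
    constructor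
    · have h1 : (Polynomial.X + 1 : Polynomial ℝ).natDegree ≤ 1 :=
        (Polynomial.natDegree_add_le _ _).trans (by simp)
      refine (Polynomial.natDegree_comp_le).trans ?_
      have : (Q k).natDegree * (Polynomial.X + 1 : Polynomial ℝ).natDegree
          ≤ (Q k).natDegree * 1 := Nat.mul_le_mul_left _ h1
      rw [mul_one] at this
      refine this.trans ((hQd k).trans ?_)
      have := Finset.mem_range.mp hk
      omega
    · simp
  · intro n
    have hIcc : ∀ ℓ : ℕ, ∑ j ∈ Finset.Icc 1 n, (j : ℝ) ^ ℓ
        = ∑ j ∈ Finset.range (n + 1), (j : ℝ) ^ ℓ - (0 : ℝ) ^ ℓ := by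
      intro ℓ
      rw [Finset.range_eq_Ico, show Finset.Ico 0 (n+1) = insert 0 (Finset.Icc 1 n) by
        ext x; simp [Nat.lt_succ_iff]; omega]
      rw [Finset.sum_insert (by simp)]
      push_cast
      ring
    have hev : ∀ j : ℕ, p.eval (j : ℝ) = ∑ k ∈ Finset.range (ν + 1), p.coeff k * (j : ℝ) ^ k :=
      fun j => Polynomial.eval_eq_sum_range' (Nat.lt_succ_of_le hp) _
    rw [Finset.sum_congr rfl fun j _ => hev j, Finset.sum_comm]
    rw [Polynomial.eval_finset_sum]
    refine Finset.sum_congr rfl fun k _ => ?_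
    rw [← Finset.mul_sum, Polynomial.eval_mul, Polynomial.eval_C, Polynomial.eval_sub,
      Polynomial.eval_comp, Polynomial.eval_C]
    congr 1
    rw [show (Polynomial.X + 1 : Polynomial ℝ).eval (n : ℝ) = ((n + 1 : ℕ) : ℝ) by
      push_cast; simp, hQe k, hIcc k]

theorem detrended_walk_invariant_to_polynomial_trend (m ν i : ℕ) (hi : 1 ≤ i)
    (hD : IsUnit ((designMat m ν)ᵀ * designMat m ν))
    (X : ℕ → ℝ) (p : Polynomial ℝ) (hp : p.natDegree ≤ ν) :
    (1 - designMat m ν * ((designMat m ν)ᵀ * designMat m ν)⁻¹ * (designMat m ν)ᵀ) *ᵥ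
        (fun t : Fin (m + 1) => ∑ j ∈ Finset.Icc 1 (i + t.val), (X j + p.eval (j : ℝ)))
      = (1 - designMat m ν * ((designMat m ν)ᵀ * designMat m ν)⁻¹ * (designMat m ν)ᵀ) *ᵥ
        (fun t : Fin (m + 1) => ∑ j ∈ Finset.Icc 1 (i + t.val), X j) := by
  set D := designMat m ν with hDdef
  set Qm : Matrix (Fin (m + 1)) (Fin (m + 1)) ℝ := 1 - D * (Dᵀ * D)⁻¹ * Dᵀ with hQm
  obtain ⟨q, hqd, hqe⟩ := sum_poly_Icc p ν hp
  set r : Polynomial ℝ := q.comp (Polynomial.X + Polynomial.C ((i : ℝ) - 1)) with hr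
  have hrd : r.natDegree < ν + 2 := by
    have h1 : (Polynomial.X + Polynomial.C ((i:ℝ)-1)).natDegree ≤ 1 :=
      le_of_eq (Polynomial.natDegree_X_add_C _)
    have h2 : r.natDegree ≤ q.natDegree := by
      refine (Polynomial.natDegree_comp_le).trans ?_
      have := Nat.mul_le_mul_left q.natDegree h1
      rwa [mul_one] at this
    omega
  set c : Fin (ν + 2) → ℝ := fun k => r.coeff k with hc
  have hv : (fun t : Fin (m + 1) => ∑ j ∈ Finset.Icc 1 (i + t.val), p.eval (j : ℝ))
      = D *ᵥ c := by
    funext t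
    have h1 : ∑ j ∈ Finset.Icc 1 (i + t.val), p.eval (j : ℝ)
        = q.eval ((i + t.val : ℕ) : ℝ) := (hqe _).symm
    have h2 : q.eval ((i + t.val : ℕ) : ℝ) = r.eval ((t.val : ℝ) + 1) := by
      rw [hr, Polynomial.eval_comp, Polynomial.eval_add, Polynomial.eval_X, Polynomial.eval_C]
      congr 1
      push_cast
      ring
    have h3 : r.eval ((t.val : ℝ) + 1)
        = ∑ k ∈ Finset.range (ν + 2), r.coeff k * ((t.val : ℝ) + 1) ^ k :=
      Polynomial.eval_eq_sum_range' hrd _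
    simp only [h1, h2, h3, ← Fin.sum_univ_eq_sum_range
      (fun k => r.coeff k * ((t.val : ℝ) + 1) ^ k) (ν + 2)]
    simp [Matrix.mulVec, dotProduct, hDdef, designMat, hc, mul_comm]
  have hQD : Qm * D = 0 := by
    have hdet : IsUnit (Dᵀ * D).det := (Matrix.isUnit_iff_isUnit_det _).mp hD
    have hinv : (Dᵀ * D)⁻¹ * (Dᵀ * D) = 1 := Matrix.nonsing_inv_mul _ hdet
    calc Qm * D = D - D * ((Dᵀ * D)⁻¹ * (Dᵀ * D)) := by
          rw [hQm, Matrix.sub_mul, Matrix.one_mul, Matrix.mul_assoc, Matrix.mul_assoc]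
      _ = 0 := by rw [hinv, Matrix.mul_one, sub_self]
  have hsplit : (fun t : Fin (m + 1) => ∑ j ∈ Finset.Icc 1 (i + t.val), (X j + p.eval (j : ℝ)))
      = (fun t : Fin (m + 1) => ∑ j ∈ Finset.Icc 1 (i + t.val), X j) + D *ᵥ c := by
    funext t
    rw [← hv]
    simp [Finset.sum_add_distrib]
  rw [hsplit, Matrix.mulVec_add, Matrix.mulVec_mulVec, hQD]
  simp
end

section
/- Entries of K_{m+1} in the linear-fit case: let P_{m+1} be the orthogonal projection onto the span of (1,1,…,1) and (1,2,…,m+1) in ℝ^{m+1}, Q_{m+1} := I − P_{m+1}, J the (m+1)×(m+1) lower-triangular matrix of ones, and K_{m+1} := Jᵀ Q_{m+1} J. Then for all r, s ≥ 2, [K_{m+1}]_{r,s} = m + 2 − max{r,s} − (m+2−r)(m+2−s)[m² + 2m + 3(r−1)(s−1)] / (m(m+1)(m+2)), and [K_{m+1}]_{r,s} = 0 whenever r = 1 or s = 1. -/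
open Matrix

/-- The lower-triangular matrix of ones, `J_{r,s} = 1` iff `s ≤ r` (indices `1,…,m+1`). -/
def Jones (m : ℕ) : Matrix (Fin (m + 1)) (Fin (m + 1)) ℝ :=
  fun r s => if s ≤ r then 1 else 0

/-- The `(m+1) × 2` design matrix with rows `(1, t)` for `t = 1, …, m+1`. -/
def linDesign (m : ℕ) : Matrix (Fin (m + 1)) (Fin 2) ℝ :=
  fun t j => ((t : ℝ) + 1) ^ (j : ℕ)

/-- `Q_{m+1} = I − D(DᵀD)⁻¹Dᵀ` for the linear-fit design matrix. -/
noncomputable def Qlin (m : ℕ) : Matrix (Fin (m + 1)) (Fin (m + 1)) ℝ :=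
  1 - linDesign m * ((linDesign m)ᵀ * linDesign m)⁻¹ * (linDesign m)ᵀ

/-- `K_{m+1} := Jᵀ Q_{m+1} J`. -/
noncomputable def Kmat (m : ℕ) : Matrix (Fin (m + 1)) (Fin (m + 1)) ℝ :=
  (Jones m)ᵀ * Qlin m * Jones m


lemma sum_poly (α β γ : ℝ) : ∀ k : ℕ,
    ∑ i ∈ Finset.range k, (α + β * ((i : ℝ) + 1) + γ * ((i : ℝ) + 1) ^ 2)
      = α * k + β * ((k : ℝ) * ((k : ℝ) + 1) / 2) + γ * ((k : ℝ) * ((k : ℝ) + 1) * (2 * (k : ℝ) + 1) / 6)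
  | 0 => by simp
  | (k + 1) => by
    rw [Finset.sum_range_succ, sum_poly α β γ k]
    push_cast
    ring

lemma sum_ind (m c : ℕ) (hc : c ≤ m + 1) (α β γ : ℝ) :
    ∑ a : Fin (m + 1), (if c ≤ a.val then α + β * ((a.val : ℝ) + 1) + γ * ((a.val : ℝ) + 1) ^ 2 else 0)
      = α * ((m : ℝ) + 1 - c) + β * ((((m : ℝ) + 1) * ((m : ℝ) + 2) - (c : ℝ) * ((c : ℝ) + 1)) / 2)
        + γ * ((((m : ℝ) + 1) * ((m : ℝ) + 2) * (2 * (m : ℝ) + 3)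
            - (c : ℝ) * ((c : ℝ) + 1) * (2 * (c : ℝ) + 1)) / 6) := by
  rw [Fin.sum_univ_eq_sum_range (fun i : ℕ => if c ≤ i then α + β * ((i : ℝ) + 1) + γ * ((i : ℝ) + 1) ^ 2 else 0)]
  rw [← Finset.sum_filter]
  have hset : (Finset.range (m + 1)).filter (fun i => c ≤ i) = Finset.Ico c (m + 1) := by
    ext x; simp [Finset.mem_Ico, Finset.mem_range]; omega
  rw [hset, Finset.sum_Ico_eq_sub _ hc, sum_poly, sum_poly]
  push_cast
  ring

lemma cor0 (m c : ℕ) (hc : c ≤ m + 1) :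
    ∑ a : Fin (m + 1), (if c ≤ a.val then (1 : ℝ) else 0) = (m : ℝ) + 1 - c := by
  simpa using sum_ind m c hc 1 0 0

lemma cor1 (m c : ℕ) (hc : c ≤ m + 1) :
    ∑ a : Fin (m + 1), (if c ≤ a.val then ((a.val : ℝ) + 1) else 0)
      = (((m : ℝ) + 1) * ((m : ℝ) + 2) - (c : ℝ) * ((c : ℝ) + 1)) / 2 := by
  simpa using sum_ind m c hc 0 1 0

lemma indSumAffine (m c : ℕ) (hc : c ≤ m + 1) (u v : ℝ) :
    ∑ a : Fin (m + 1), (if c ≤ a.val then (1 : ℝ) else 0) * (u + v * ((a.val : ℝ) + 1))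
      = u * ((m : ℝ) + 1 - c) + v * ((((m : ℝ) + 1) * ((m : ℝ) + 2) - (c : ℝ) * ((c : ℝ) + 1)) / 2) := by
  have pt : ∀ a : Fin (m + 1), (if c ≤ a.val then (1 : ℝ) else 0) * (u + v * ((a.val : ℝ) + 1))
      = u * (if c ≤ a.val then (1 : ℝ) else 0) + v * (if c ≤ a.val then ((a.val : ℝ) + 1) else 0) := by
    intro a; by_cases h : c ≤ a.val <;> simp [h]
  simp only [pt]
  rw [Finset.sum_add_distrib, ← Finset.mul_sum, ← Finset.mul_sum, cor0 m c hc, cor1 m c hc]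

noncomputable def Binv (m : ℕ) : Matrix (Fin 2) (Fin 2) ℝ :=
  (12 / (((m : ℝ) + 1) ^ 2 * m * ((m : ℝ) + 2))) •
    !![((m : ℝ) + 1) * ((m : ℝ) + 2) * (2 * (m : ℝ) + 3) / 6, -(((m : ℝ) + 1) * ((m : ℝ) + 2) / 2);
       -(((m : ℝ) + 1) * ((m : ℝ) + 2) / 2), (m : ℝ) + 1]

lemma hG (m : ℕ) : (linDesign m)ᵀ * linDesign m =
    !![(m : ℝ) + 1, ((m : ℝ) + 1) * ((m : ℝ) + 2) / 2;
       ((m : ℝ) + 1) * ((m : ℝ) + 2) / 2, ((m : ℝ) + 1) * ((m : ℝ) + 2) * (2 * (m : ℝ) + 3) / 6] := by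
  have e1 : ∑ a : Fin (m + 1), ((a.val : ℝ) + 1) = ((m : ℝ) + 1) * ((m : ℝ) + 2) / 2 := by
    have := sum_ind m 0 (Nat.zero_le _) 0 1 0
    simpa using this
  have e2 : ∑ a : Fin (m + 1), ((a.val : ℝ) + 1) * ((a.val : ℝ) + 1)
      = ((m : ℝ) + 1) * ((m : ℝ) + 2) * (2 * (m : ℝ) + 3) / 6 := by
    have := sum_ind m 0 (Nat.zero_le _) 0 0 1
    simpa [sq] using this
  ext i j
  fin_cases i <;> fin_cases j <;>
    simp [Matrix.mul_apply, linDesign, e1, e2]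

lemma hGinv (m : ℕ) (hm : 1 ≤ m) : ((linDesign m)ᵀ * linDesign m)⁻¹ = Binv m := by
  have hm0 : (m : ℝ) ≠ 0 := Nat.cast_ne_zero.mpr (by omega)
  have hm1 : (m : ℝ) + 1 ≠ 0 := by positivity
  have hm2 : (m : ℝ) + 2 ≠ 0 := by positivity
  apply Matrix.inv_eq_right_inv
  rw [hG]
  ext i j
  fin_cases i <;> fin_cases j <;>
    · simp [Binv, Matrix.mul_apply, Fin.sum_univ_two, Matrix.one_apply]
      field_simp
      ring

lemma Qval (m : ℕ) (hm : 1 ≤ m) (a b : Fin (m + 1)) :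
    Qlin m a b = (if a = b then (1 : ℝ) else 0)
      - (12 / (((m : ℝ) + 1) ^ 2 * m * ((m : ℝ) + 2))) *
          ( ((m : ℝ) + 1) * ((m : ℝ) + 2) * (2 * (m : ℝ) + 3) / 6
            - (((m : ℝ) + 1) * ((m : ℝ) + 2) / 2) * ((b.val : ℝ) + 1)
            - (((m : ℝ) + 1) * ((m : ℝ) + 2) / 2) * ((a.val : ℝ) + 1)
            + ((m : ℝ) + 1) * ((a.val : ℝ) + 1) * ((b.val : ℝ) + 1) ) := by
  rw [Qlin, hGinv m hm]
  simp only [Matrix.sub_apply, Matrix.one_apply, Matrix.mul_apply, Fin.sum_univ_two,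
    Matrix.transpose_apply, linDesign, Binv, Matrix.smul_apply, smul_eq_mul]
  norm_num [Matrix.cons_val_zero, Matrix.cons_val_one, Matrix.head_cons, Matrix.head_fin_const]
  ring_nf

lemma key (m : ℕ) (hm : 1 ≤ m) (r s : Fin (m + 1)) (k S1 S2 A0 A1 C0 C1 : ℝ)
    (hk : k = 12 / (((m : ℝ) + 1) ^ 2 * m * ((m : ℝ) + 2)))
    (hS1 : S1 = ((m : ℝ) + 1) * ((m : ℝ) + 2) / 2)
    (hS2 : S2 = ((m : ℝ) + 1) * ((m : ℝ) + 2) * (2 * (m : ℝ) + 3) / 6)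
    (hA0 : A0 = (m : ℝ) + 1 - r.val)
    (hA1 : A1 = (((m : ℝ) + 1) * ((m : ℝ) + 2) - (r.val : ℝ) * ((r.val : ℝ) + 1)) / 2)
    (hC0 : C0 = k * S2 * A0 - k * S1 * A1)
    (hC1 : C1 = k * ((m : ℝ) + 1) * A1 - k * S1 * A0) :
    Kmat m r s = ((m : ℝ) + 1 - (max r.val s.val : ℕ))
      - (C0 * ((m : ℝ) + 1 - s.val)
        + C1 * ((((m : ℝ) + 1) * ((m : ℝ) + 2) - (s.val : ℝ) * ((s.val : ℝ) + 1)) / 2)) := by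
  have hKsum : Kmat m r s
      = ∑ b : Fin (m + 1), (if s.val ≤ b.val then (1 : ℝ) else 0) *
          (∑ a : Fin (m + 1), (if r.val ≤ a.val then (1 : ℝ) else 0) * Qlin m a b) := by
    unfold Kmat
    simp only [Matrix.mul_apply, Matrix.transpose_apply, Jones, Finset.sum_mul, Finset.mul_sum]
    refine Finset.sum_congr rfl fun b _ => Finset.sum_congr rfl fun a _ => ?_
    simp only [Fin.le_def]
    ring
  have hInner : ∀ b : Fin (m + 1),
      (∑ a : Fin (m + 1), (if r.val ≤ a.val then (1 : ℝ) else 0) * Qlin m a b)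
        = (if r.val ≤ b.val then (1 : ℝ) else 0) - (C0 + C1 * ((b.val : ℝ) + 1)) := by
    intro b
    have pt : ∀ a : Fin (m + 1), (if r.val ≤ a.val then (1 : ℝ) else 0) * Qlin m a b
        = (if a = b then (if r.val ≤ b.val then (1 : ℝ) else 0) else 0)
          - (if r.val ≤ a.val then (1 : ℝ) else 0) *
              ((k * (S2 - S1 * ((b.val : ℝ) + 1)))
                + (k * (((m : ℝ) + 1) * ((b.val : ℝ) + 1) - S1)) * ((a.val : ℝ) + 1)) := by
      intro a
      rw [Qval m hm a b, hk, hS1, hS2]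
      by_cases h2 : a = b
      · subst h2
        by_cases h : r.val ≤ a.val <;> simp [h] <;> ring
      · by_cases h : r.val ≤ a.val <;> simp [h, h2] <;> ring
    rw [Finset.sum_congr rfl fun a _ => pt a, Finset.sum_sub_distrib,
      Finset.sum_ite_eq' Finset.univ b, indSumAffine m r.val (by omega)]
    simp only [Finset.mem_univ, if_true]
    rw [hC0, hC1, hA0, hA1]
    ring
  rw [hKsum]
  simp only [hInner]
  have pt2 : ∀ b : Fin (m + 1),
      (if s.val ≤ b.val then (1 : ℝ) else 0) *
          ((if r.val ≤ b.val then (1 : ℝ) else 0) - (C0 + C1 * ((b.val : ℝ) + 1)))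
        = (if max r.val s.val ≤ b.val then (1 : ℝ) else 0)
          - (if s.val ≤ b.val then (1 : ℝ) else 0) * (C0 + C1 * ((b.val : ℝ) + 1)) := by
    intro b
    by_cases h1 : s.val ≤ b.val <;> by_cases h2 : r.val ≤ b.val <;>
      · have h3 : (max r.val s.val ≤ b.val) ↔ (r.val ≤ b.val ∧ s.val ≤ b.val) := max_le_iff
        simp [h1, h2, h3]
  simp only [pt2]
  rw [Finset.sum_sub_distrib, cor0 m (max r.val s.val) (by omega),
    indSumAffine m s.val (by omega)]

theorem Kmat_entries (m : ℕ) (hm : 1 ≤ m) (r s : Fin (m + 1)) :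
    (1 ≤ r.val → 1 ≤ s.val →
      Kmat m r s =
        (m : ℝ) + 2 - max ((r.val : ℝ) + 1) ((s.val : ℝ) + 1) -
          ((m : ℝ) + 2 - ((r.val : ℝ) + 1)) * ((m : ℝ) + 2 - ((s.val : ℝ) + 1)) *
              ((m : ℝ) ^ 2 + 2 * m + 3 * (r.val : ℝ) * (s.val : ℝ)) /
            ((m : ℝ) * ((m : ℝ) + 1) * ((m : ℝ) + 2))) ∧
    (r.val = 0 ∨ s.val = 0 → Kmat m r s = 0) := by
  have hm0 : (m : ℝ) ≠ 0 := Nat.cast_ne_zero.mpr (by omega)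
  have hm1 : (m : ℝ) + 1 ≠ 0 := by positivity
  have hm2 : (m : ℝ) + 2 ≠ 0 := by positivity
  have hkey := key m hm r s _ _ _ _ _ _ _ rfl rfl rfl rfl rfl rfl rfl
  constructor
  · intro hr hs
    rw [hkey]
    rw [show max ((r.val : ℝ) + 1) ((s.val : ℝ) + 1) = max (r.val : ℝ) (s.val : ℝ) + 1 from
      max_add_add_right _ _ _]
    rw [show ((max r.val s.val : ℕ) : ℝ) = max (r.val : ℝ) (s.val : ℝ) from Nat.cast_max _ _]
    generalize max (r.val : ℝ) (s.val : ℝ) = M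
    field_simp
    ring
  · intro h
    rcases h with h | h
    · rw [hkey, h]
      rw [show max 0 s.val = s.val from Nat.zero_max _]
      push_cast
      field_simp
      ring
    · rw [hkey, h]
      rw [show max r.val 0 = r.val from Nat.max_zero _]
      push_cast
      field_simp
      ring
end

section
/- Trace formula for K: with K_{m+1} := Jᵀ Q_{m+1} J as in the linear-detrending setting (Q_{m+1} the complement of projection onto constants and linear functions on {1,…,m+1}, J the lower-triangular all-ones matrix), one has trace(K_{m+1}) = (m² + 2m − 3)/15. -/
open Matrix

open Finset in
private lemma sum_quartic (c0 c1 c2 c3 c4 : ℝ) (n : ℕ) :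
    ∑ r ∈ range n, (c0 + c1*(r:ℝ) + c2*(r:ℝ)^2 + c3*(r:ℝ)^3 + c4*(r:ℝ)^4)
      = c0*n + c1*((n:ℝ)*(n-1)/2) + c2*((n:ℝ)*(n-1)*(2*n-1)/6)
        + c3*(((n:ℝ)*(n-1)/2)^2)
        + c4*((n:ℝ)*(n-1)*(2*n-1)*(3*(n:ℝ)^2-3*n-1)/30) := by
  induction n with
  | zero => simp
  | succ k ih => rw [Finset.sum_range_succ, ih]; push_cast; ring

open Finset in
private lemma suml (k : ℕ) : ∑ a ∈ range k, ((a:ℝ)+1) = (k:ℝ)*((k:ℝ)+1)/2 := by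
  induction k with
  | zero => simp
  | succ k ih => rw [Finset.sum_range_succ, ih]; push_cast; ring

open Finset in
private lemma sumsq (k : ℕ) : ∑ a ∈ range k, ((a:ℝ)+1)^2 = (k:ℝ)*((k:ℝ)+1)*(2*(k:ℝ)+1)/6 := by
  induction k with
  | zero => simp
  | succ k ih => rw [Finset.sum_range_succ, ih]; push_cast; ring

open Finset in
private lemma sum_ite_le (n k : ℕ) (f : ℕ → ℝ) (h : k ≤ n) :
    ∑ a ∈ range n, (if k ≤ a then f a else 0)
      = ∑ a ∈ range n, f a - ∑ a ∈ range k, f a := by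
  rw [← Finset.sum_filter]
  have : (range n).filter (fun a => k ≤ a) = Finset.Ico k n := by
    ext a; simp [Finset.mem_Ico]; omega
  rw [this, Finset.sum_Ico_eq_sub f h]

open Finset in
private lemma sum_ind_s6 (n a : ℕ) (ha : a < n) :
    ∑ r ∈ range n, (if r ≤ a then (1:ℝ) else 0) = (a:ℝ) + 1 := by
  rw [Finset.sum_boole]
  have : (range n).filter (fun r => r ≤ a) = range (a+1) := by
    ext r; simp; omega
  rw [this, Finset.card_range]
  push_cast; ring

open Finset in
private lemma key_s6 (n : ℕ) (f g : ℕ → ℝ) :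
    ∑ a ∈ range n, ∑ b ∈ range n,
      (∑ r ∈ range n, (if r ≤ a then (1:ℝ) else 0) * (if r ≤ b then 1 else 0)) * (f a * g b)
    = ∑ r ∈ range n, (∑ a ∈ range n, f a - ∑ a ∈ range r, f a)
        * (∑ b ∈ range n, g b - ∑ b ∈ range r, g b) := by
  have step : ∀ a b, (∑ r ∈ range n, (if r ≤ a then (1:ℝ) else 0) * (if r ≤ b then 1 else 0)) * (f a * g b)
      = ∑ r ∈ range n, ((if r ≤ a then f a else 0) * (if r ≤ b then g b else 0)) := by
    intro a b
    rw [Finset.sum_mul]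
    refine Finset.sum_congr rfl fun r _ => ?_
    by_cases h1 : r ≤ a <;> by_cases h2 : r ≤ b <;> simp [h1, h2]
  simp only [step]
  have swap1 : ∀ a, ∑ b ∈ range n, ∑ r ∈ range n, ((if r ≤ a then f a else 0) * (if r ≤ b then g b else 0))
      = ∑ r ∈ range n, ∑ b ∈ range n, ((if r ≤ a then f a else 0) * (if r ≤ b then g b else 0)) :=
    fun a => Finset.sum_comm
  simp only [swap1]
  rw [Finset.sum_comm]
  refine Finset.sum_congr rfl fun r hr => ?_
  have hr' : r ≤ n := le_of_lt (Finset.mem_range.mp hr)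
  rw [← sum_ite_le n r f hr', ← sum_ite_le n r g hr', ← Finset.sum_mul_sum]

open Finset in
private lemma key' (n : ℕ) (f g : ℕ → ℝ) :
    ∑ b ∈ range n, (∑ a ∈ range n,
        f a * (∑ r ∈ range n, (if r ≤ a then (1:ℝ) else 0) * (if r ≤ b then 1 else 0))) * g b
    = ∑ r ∈ range n, (∑ a ∈ range n, f a - ∑ a ∈ range r, f a)
        * (∑ b ∈ range n, g b - ∑ b ∈ range r, g b) := by
  rw [← key_s6 n f g]
  rw [Finset.sum_comm]
  refine Finset.sum_congr rfl fun b _ => ?_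
  rw [Finset.sum_mul]
  refine Finset.sum_congr rfl fun a _ => by ring

open Finset in
private lemma B_entry (m : ℕ) (i j : Fin 2) :
    ((linDesign m)ᵀ * (Jones m * (Jones m)ᵀ) * linDesign m) i j
    = ∑ r ∈ range (m+1),
        ((∑ a ∈ range (m+1), ((a:ℝ)+1)^(i:ℕ) - ∑ a ∈ range r, ((a:ℝ)+1)^(i:ℕ))
          * (∑ b ∈ range (m+1), ((b:ℝ)+1)^(j:ℕ) - ∑ b ∈ range r, ((b:ℝ)+1)^(j:ℕ))) := by
  rw [← key' (m+1) (fun a => ((a:ℝ)+1)^(i:ℕ)) (fun b => ((b:ℝ)+1)^(j:ℕ))]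
  simp only [Matrix.mul_apply, transpose_apply, Jones, linDesign, Fin.le_def]
  rw [Fin.sum_univ_eq_sum_range (fun b => (∑ a : Fin (m+1),
        ((a:ℝ)+1)^(i:ℕ) * (∑ r : Fin (m+1), (if (r:ℕ) ≤ (a:ℕ) then (1:ℝ) else 0) * (if (r:ℕ) ≤ b then 1 else 0)))
          * (((b:ℝ)+1)^(j:ℕ))) (m+1)]
  refine Finset.sum_congr rfl fun b _ => ?_
  congr 1
  rw [Fin.sum_univ_eq_sum_range (fun a =>
        ((a:ℝ)+1)^(i:ℕ) * (∑ r : Fin (m+1), (if (r:ℕ) ≤ a then (1:ℝ) else 0) * (if (r:ℕ) ≤ b then 1 else 0))) (m+1)]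
  refine Finset.sum_congr rfl fun a _ => ?_
  congr 1
  exact Fin.sum_univ_eq_sum_range (fun r => (if r ≤ a then (1:ℝ) else 0) * (if r ≤ b then 1 else 0)) (m+1)

open Finset in
private lemma G_entry (m : ℕ) (i j : Fin 2) :
    ((linDesign m)ᵀ * linDesign m) i j
    = ∑ t ∈ range (m+1), ((t:ℝ)+1)^(i:ℕ) * ((t:ℝ)+1)^(j:ℕ) := by
  simp only [Matrix.mul_apply, transpose_apply, linDesign]
  exact Fin.sum_univ_eq_sum_range (fun t => ((t:ℝ)+1)^(i:ℕ) * ((t:ℝ)+1)^(j:ℕ)) (m+1)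

open Finset in
theorem trace_Kmat (m : ℕ) (hm : 1 ≤ m) :
    (Kmat m).trace = ((m : ℝ) ^ 2 + 2 * m - 3) / 15 := by
  have hm1 : (1:ℝ) ≤ (m:ℝ) := by exact_mod_cast hm
  unfold Kmat Qlin
  set D := linDesign m with hD
  set J := Jones m with hJ
  set N : ℝ := (m:ℝ) + 1 with hN
  -- Gram matrix
  have hG : Dᵀ * D = !![N, N*(N+1)/2; N*(N+1)/2, N*(N+1)*(2*N+1)/6] := by
    ext i j
    fin_cases i <;> fin_cases j <;>
      simp only [hD, G_entry, Fin.mk_zero, Fin.mk_one, Fin.isValue, Fin.val_zero, Fin.val_one,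
        pow_zero, pow_one, one_mul, mul_one, Matrix.of_apply, Matrix.cons_val', Matrix.cons_val_zero,
        Matrix.cons_val_one, Matrix.head_cons, Matrix.empty_val', Matrix.cons_val_fin_one,
        Matrix.head_fin_const]
    · simp [hN]
    · rw [suml, hN]; push_cast; ring
    · rw [suml, hN]; push_cast; ring
    · have h2 : ∀ t ∈ range (m+1), ((t:ℝ)+1) * ((t:ℝ)+1) = ((t:ℝ)+1)^2 := fun t _ => by ring
      rw [Finset.sum_congr rfl h2, sumsq, hN]; push_cast; ring
  have hd : (Dᵀ * D).det = N^2*(N+1)*(N-1)/12 := by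
    rw [hG, Matrix.det_fin_two_of]; ring
  have hd0 : N^2*(N+1)*(N-1)/12 ≠ 0 := by
    apply ne_of_gt
    have h0 : (0:ℝ) < (m:ℝ) := by linarith
    have h2 : (0:ℝ) < N := by rw [hN]; linarith
    have h3 : (0:ℝ) < N + 1 := by linarith
    have h4 : (0:ℝ) < N - 1 := by rw [hN]; linarith
    positivity
  have hInv : (Dᵀ * D)⁻¹ = (N^2*(N+1)*(N-1)/12)⁻¹ •
      !![N*(N+1)*(2*N+1)/6, -(N*(N+1)/2); -(N*(N+1)/2), N] := by
    rw [Matrix.inv_def, hG, Matrix.det_fin_two_of, Matrix.adjugate_fin_two_of,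
      Ring.inverse_eq_inv]
    congr 1
    ring
  -- trace of J * Jᵀ
  have hMtr : (J * Jᵀ).trace = N*(N+1)/2 := by
    have hdiag : ∀ i : Fin (m+1), (J * Jᵀ) i i = (i:ℝ)+1 := by
      intro i
      simp only [Matrix.mul_apply, Matrix.transpose_apply, hJ, Jones, Fin.le_def]
      rw [Fin.sum_univ_eq_sum_range
        (fun r => (if r ≤ (i:ℕ) then (1:ℝ) else 0) * (if r ≤ (i:ℕ) then 1 else 0)) (m+1)]
      have h2 : ∀ r ∈ range (m+1),
          (if r ≤ (i:ℕ) then (1:ℝ) else 0) * (if r ≤ (i:ℕ) then 1 else 0)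
            = (if r ≤ (i:ℕ) then (1:ℝ) else 0) := fun r _ => by
        by_cases h : r ≤ (i:ℕ) <;> simp [h]
      rw [Finset.sum_congr rfl h2, sum_ind_s6 (m+1) i i.isLt]
    rw [Matrix.trace]
    simp only [Matrix.diag_apply, hdiag]
    rw [Fin.sum_univ_eq_sum_range (fun i => (i:ℝ)+1) (m+1), suml, hN]
    push_cast; ring
  -- B matrix
  have hB : Dᵀ * (J * Jᵀ) * D =
      !![∑ r ∈ range (m+1), (N - (r:ℝ))*(N - (r:ℝ)),
         ∑ r ∈ range (m+1), (N - (r:ℝ))*(N*(N+1)/2 - (r:ℝ)*((r:ℝ)+1)/2);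
         ∑ r ∈ range (m+1), (N - (r:ℝ))*(N*(N+1)/2 - (r:ℝ)*((r:ℝ)+1)/2),
         ∑ r ∈ range (m+1), (N*(N+1)/2 - (r:ℝ)*((r:ℝ)+1)/2)*(N*(N+1)/2 - (r:ℝ)*((r:ℝ)+1)/2)] := by
    ext i j
    fin_cases i <;> fin_cases j <;>
      rw [hD, hJ, B_entry] <;>
      simp only [Fin.mk_zero, Fin.mk_one, Fin.isValue, Fin.val_zero, Fin.val_one,
        pow_zero, pow_one, Matrix.of_apply, Matrix.cons_val', Matrix.cons_val_zero,
        Matrix.cons_val_one, Matrix.head_cons, Matrix.empty_val', Matrix.cons_val_fin_one,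
        Matrix.head_fin_const] <;>
      refine Finset.sum_congr rfl fun r hr => ?_ <;>
      simp only [Finset.sum_const, Finset.card_range, nsmul_eq_mul, mul_one, suml] <;>
      rw [hN] <;> push_cast <;> ring
  -- rearrange the trace
  rw [Matrix.trace_mul_comm, ← Matrix.mul_assoc, Matrix.mul_sub, Matrix.mul_one,
    Matrix.trace_sub, hMtr]
  have cyc : (J * Jᵀ * (D * (Dᵀ * D)⁻¹ * Dᵀ)).trace
      = ((Dᵀ * (J * Jᵀ) * D) * (Dᵀ * D)⁻¹).trace := by
    rw [← Matrix.mul_assoc, Matrix.trace_mul_comm, ← Matrix.mul_assoc, ← Matrix.mul_assoc]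
  rw [cyc, hB, hInv, Matrix.mul_smul, Matrix.trace_smul, smul_eq_mul]
  rw [Matrix.trace_fin_two]
  simp only [Matrix.mul_apply, Fin.sum_univ_two, Matrix.of_apply, Matrix.cons_val',
    Matrix.cons_val_zero, Matrix.cons_val_one, Matrix.head_cons, Matrix.empty_val',
    Matrix.cons_val_fin_one, Matrix.head_fin_const]
  -- evaluate the three quadratic sums
  have e00 : (∑ r ∈ range (m+1), (N - (r:ℝ))*(N - (r:ℝ)))
      = ∑ r ∈ range (m+1), (N^2 + (-2*N)*(r:ℝ) + 1*(r:ℝ)^2 + 0*(r:ℝ)^3 + 0*(r:ℝ)^4) :=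
    Finset.sum_congr rfl fun r _ => by ring
  have e01 : (∑ r ∈ range (m+1), (N - (r:ℝ))*(N*(N+1)/2 - (r:ℝ)*((r:ℝ)+1)/2))
      = ∑ r ∈ range (m+1), (N*(N^2+N)/2 + (-(N^2+2*N)/2)*(r:ℝ) + ((1-N)/2)*(r:ℝ)^2
          + (1/2)*(r:ℝ)^3 + 0*(r:ℝ)^4) :=
    Finset.sum_congr rfl fun r _ => by ring
  have e11 : (∑ r ∈ range (m+1), (N*(N+1)/2 - (r:ℝ)*((r:ℝ)+1)/2)*(N*(N+1)/2 - (r:ℝ)*((r:ℝ)+1)/2))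
      = ∑ r ∈ range (m+1), (((N^2+N)/2)^2 + (-((N^2+N)/2))*(r:ℝ) + (-((N^2+N)/2)+1/4)*(r:ℝ)^2
          + (1/2)*(r:ℝ)^3 + (1/4)*(r:ℝ)^4) :=
    Finset.sum_congr rfl fun r _ => by ring
  rw [e00, e01, e11, sum_quartic, sum_quartic, sum_quartic]
  rw [hN] at hd0 ⊢
  push_cast at hd0 ⊢
  have hm0 : (m:ℝ) ≠ 0 := (by linarith : (0:ℝ) < m).ne'
  simp only [add_sub_cancel_right] at hd0 ⊢
  field_simp
  ring
end

section
/- Off-diagonal trace sums for K: with K_{m+1} as in the linear-detrending setting and for 1 ≤ j < m, the j-th superdiagonal sum α_j^{(m)} := ∑_{r=2}^{m+1−j} [K_{m+1}]_{r,r+j} satisfies α_j^{(m)} = [(m−j)(m+1−j)(m+2−j) / (m(m+1)(m+2))] · [ (m²+2m−3)/15 − (j² + 3j(m+1))/10 ]. -/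
set_option maxHeartbeats 1000000

open Matrix

namespace KmatAux

open Finset

lemma L1 (n : ℕ) : ∑ t ∈ range n, ((t:ℝ)+1) = (n:ℝ)*((n:ℝ)+1)/2 := by
  induction n with
  | zero => simp
  | succ n ih => rw [sum_range_succ, ih]; push_cast; ring

lemma L2 (n : ℕ) : ∑ t ∈ range n, ((t:ℝ)+1)^2 = (n:ℝ)*((n:ℝ)+1)*(2*(n:ℝ)+1)/6 := by
  induction n with
  | zero => simp
  | succ n ih => rw [sum_range_succ, ih]; push_cast; ring

lemma F1 (m : ℕ) : ∑ x : Fin (m+1), ((x.val:ℝ)+1) = ((m:ℝ)+1)*((m:ℝ)+2)/2 := by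
  rw [Fin.sum_univ_eq_sum_range (fun t => ((t:ℝ)+1)), L1]; push_cast; ring

lemma F2 (m : ℕ) : ∑ x : Fin (m+1), ((x.val:ℝ)+1)*((x.val:ℝ)+1)
    = ((m:ℝ)+1)*((m:ℝ)+2)*(2*(m:ℝ)+3)/6 := by
  have h : ∀ x : Fin (m+1), ((x.val:ℝ)+1)*((x.val:ℝ)+1) = ((x.val:ℝ)+1)^2 := by
    intro x; ring
  simp only [h]
  rw [Fin.sum_univ_eq_sum_range (fun t => ((t:ℝ)+1)^2), L2]; push_cast; ring

lemma A_eq (m : ℕ) : (linDesign m)ᵀ * linDesign m =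
    !![(m:ℝ)+1, ((m:ℝ)+1)*((m:ℝ)+2)/2;
       ((m:ℝ)+1)*((m:ℝ)+2)/2, ((m:ℝ)+1)*((m:ℝ)+2)*(2*(m:ℝ)+3)/6] := by
  ext i j
  fin_cases i <;> fin_cases j <;>
    simp [Matrix.mul_apply, linDesign, transpose_apply]
  · exact F1 m
  · exact F1 m
  · exact F2 m

noncomputable def Bmat (M : ℝ) : Matrix (Fin 2) (Fin 2) ℝ :=
  (M*(M+1)^2*(M+2)/12)⁻¹ •
    !![(M+1)*(M+2)*(2*M+3)/6, -((M+1)*(M+2)/2); -((M+1)*(M+2)/2), M+1]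

lemma Ainv_eq (m : ℕ) (hm : 1 ≤ m) :
    ((linDesign m)ᵀ * linDesign m)⁻¹ = Bmat (m:ℝ) := by
  have h0 : (m:ℝ) ≠ 0 := by
    have : (0:ℝ) < m := by exact_mod_cast hm
    linarith
  have h1 : (m:ℝ)+1 ≠ 0 := by positivity
  have h2 : (m:ℝ)+2 ≠ 0 := by positivity
  apply Matrix.inv_eq_right_inv
  rw [A_eq]
  ext i j
  fin_cases i <;> fin_cases j <;>
    simp [Bmat, Matrix.mul_apply, Fin.sum_univ_two, Matrix.one_apply] <;>
    field_simp <;> ring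

lemma T0 (n c : ℕ) (h : c ≤ n) :
    ∑ t ∈ range n, (if c ≤ t then (1:ℝ) else 0) = (n:ℝ) - c := by
  induction n with
  | zero => interval_cases c; simp
  | succ n ih =>
    rw [sum_range_succ]
    rcases Nat.lt_or_ge n c with hc | hc
    · have hcn : c = n + 1 := by omega
      subst hcn
      have : ∑ t ∈ range n, (if n+1 ≤ t then (1:ℝ) else 0) = 0 := by
        apply Finset.sum_eq_zero; intro x hx; rw [if_neg]; simp at hx; omega
      rw [this, if_neg (by omega)]; simp
    · rw [ih hc, if_pos hc]; push_cast; ring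

lemma T1 (n c : ℕ) (h : c ≤ n) :
    ∑ t ∈ range n, (if c ≤ t then ((t:ℝ)+1) else 0)
      = ((n:ℝ)*((n:ℝ)+1) - (c:ℝ)*((c:ℝ)+1))/2 := by
  induction n with
  | zero => interval_cases c; simp
  | succ n ih =>
    rw [sum_range_succ]
    rcases Nat.lt_or_ge n c with hc | hc
    · have hcn : c = n + 1 := by omega
      subst hcn
      have : ∑ t ∈ range n, (if n+1 ≤ t then ((t:ℝ)+1) else 0) = 0 := by
        apply Finset.sum_eq_zero; intro x hx; rw [if_neg]; simp at hx; omega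
      rw [this, if_neg (by omega)]; simp
    · rw [ih hc, if_pos hc]; push_cast; ring

noncomputable def bb (M x : ℝ) : ℝ := ((M+1)*(M+2) - x*(x+1))/2

noncomputable def ent (M x y : ℝ) : ℝ :=
  (M+1 - y) -
    ((M+1-x) * ((M+1)*(M+2)*(2*M+3)/6 * (M+1-y) - (M+1)*(M+2)/2 * bb M y)
      + bb M x * ((M+1) * bb M y - (M+1)*(M+2)/2 * (M+1-y))) / (M*(M+1)^2*(M+2)/12)

lemma hB0 (m : ℕ) (r : Fin (m+1)) :
    ((Jones m)ᵀ * linDesign m) r 0 = (m:ℝ)+1 - r.val := by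
  rw [Matrix.mul_apply]
  have h : ∀ t : Fin (m+1), (Jones m)ᵀ r t * linDesign m t 0
      = (if r.val ≤ t.val then (1:ℝ) else 0) := by
    intro t
    simp only [Jones, linDesign, transpose_apply, Fin.val_zero, pow_zero, mul_one, Fin.le_def]
  simp only [h]
  rw [Fin.sum_univ_eq_sum_range (fun n => if r.val ≤ n then (1:ℝ) else 0) (m+1),
    T0 (m+1) r.val (by omega)]
  push_cast; ring

lemma hB1 (m : ℕ) (r : Fin (m+1)) :
    ((Jones m)ᵀ * linDesign m) r 1 = bb (m:ℝ) (r.val:ℝ) := by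
  rw [Matrix.mul_apply]
  have h : ∀ t : Fin (m+1), (Jones m)ᵀ r t * linDesign m t 1
      = (if r.val ≤ t.val then ((t.val:ℝ)+1) else 0) := by
    intro t
    simp only [Jones, linDesign, transpose_apply, Fin.val_one, pow_one, Fin.le_def]
    split_ifs <;> ring
  simp only [h]
  rw [Fin.sum_univ_eq_sum_range (fun n => if r.val ≤ n then ((n:ℝ)+1) else 0) (m+1),
    T1 (m+1) r.val (by omega)]
  unfold bb; push_cast; ring

lemma hC0 (m : ℕ) (s : Fin (m+1)) :
    ((linDesign m)ᵀ * Jones m) 0 s = (m:ℝ)+1 - s.val := by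
  rw [Matrix.mul_apply]
  have h : ∀ t : Fin (m+1), (linDesign m)ᵀ 0 t * Jones m t s
      = (if s.val ≤ t.val then (1:ℝ) else 0) := by
    intro t
    simp only [Jones, linDesign, transpose_apply, Fin.val_zero, pow_zero, one_mul, Fin.le_def]
  simp only [h]
  rw [Fin.sum_univ_eq_sum_range (fun n => if s.val ≤ n then (1:ℝ) else 0) (m+1),
    T0 (m+1) s.val (by omega)]
  push_cast; ring

lemma hC1 (m : ℕ) (s : Fin (m+1)) :
    ((linDesign m)ᵀ * Jones m) 1 s = bb (m:ℝ) (s.val:ℝ) := by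
  rw [Matrix.mul_apply]
  have h : ∀ t : Fin (m+1), (linDesign m)ᵀ 1 t * Jones m t s
      = (if s.val ≤ t.val then ((t.val:ℝ)+1) else 0) := by
    intro t
    simp only [Jones, linDesign, transpose_apply, Fin.val_one, pow_one, Fin.le_def]
    split_ifs <;> ring
  simp only [h]
  rw [Fin.sum_univ_eq_sum_range (fun n => if s.val ≤ n then ((n:ℝ)+1) else 0) (m+1),
    T1 (m+1) s.val (by omega)]
  unfold bb; push_cast; ring

lemma hJJ (m : ℕ) (r s : Fin (m+1)) (hrs : r.val ≤ s.val) :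
    ((Jones m)ᵀ * Jones m) r s = (m:ℝ)+1 - s.val := by
  rw [Matrix.mul_apply]
  have h : ∀ t : Fin (m+1), (Jones m)ᵀ r t * Jones m t s
      = (if s.val ≤ t.val then (1:ℝ) else 0) := by
    intro t
    simp only [Jones, transpose_apply, Fin.le_def]
    split_ifs with h1 h2 h3
    · ring
    · ring
    · exfalso; omega
    · ring
  simp only [h]
  rw [Fin.sum_univ_eq_sum_range (fun n => if s.val ≤ n then (1:ℝ) else 0) (m+1),
    T0 (m+1) s.val (by omega)]
  push_cast; ring

lemma Kmat_entry (m : ℕ) (hm : 1 ≤ m) (r s : Fin (m+1)) (hrs : r.val ≤ s.val) :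
    Kmat m r s = ent (m:ℝ) (r.val:ℝ) (s.val:ℝ) := by
  have key : Kmat m = (Jones m)ᵀ * Jones m
      - ((Jones m)ᵀ * linDesign m) * Bmat (m:ℝ) * ((linDesign m)ᵀ * Jones m) := by
    unfold Kmat Qlin
    rw [Ainv_eq m hm]
    simp only [Matrix.mul_sub, Matrix.sub_mul, Matrix.mul_one, Matrix.mul_assoc]
  have expand : ∀ (B : Matrix (Fin (m+1)) (Fin 2) ℝ) (C : Matrix (Fin 2) (Fin (m+1)) ℝ),
      (B * Bmat (m:ℝ) * C) r s
        = (B r 0 * Bmat (m:ℝ) 0 0 + B r 1 * Bmat (m:ℝ) 1 0) * C 0 s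
          + (B r 0 * Bmat (m:ℝ) 0 1 + B r 1 * Bmat (m:ℝ) 1 1) * C 1 s := by
    intros B C
    rw [Matrix.mul_apply, Fin.sum_univ_two, Matrix.mul_apply, Matrix.mul_apply,
      Fin.sum_univ_two, Fin.sum_univ_two]
  rw [key, Matrix.sub_apply, hJJ m r s hrs, expand, hB0, hB1, hC0, hC1]
  have h0 : (m:ℝ) ≠ 0 := by
    have : (0:ℝ) < m := by exact_mod_cast hm
    linarith
  have h1 : (m:ℝ)+1 ≠ 0 := by positivity
  have h2 : (m:ℝ)+2 ≠ 0 := by positivity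
  unfold ent Bmat bb
  simp only [Matrix.smul_apply, Matrix.cons_val', Matrix.cons_val_zero, Matrix.cons_val_one,
    Matrix.head_cons, Matrix.empty_val', Matrix.cons_val_fin_one, Matrix.head_fin_const,
    smul_eq_mul, Matrix.of_apply]
  field_simp
  ring

noncomputable def Gfun (M Jc N : ℝ) : ℝ :=
  (N/2 - N^2/2 - Jc*N + M*N) -
  ( N/30 - N^3/12 + N^5/20 - Jc*N^2/8 + Jc*N^4/8 - Jc^2*N/12 + Jc^2*N^3/12
    + 13*M*N/90 + M*N^2/24 - M*N^3/9 - M*N^4/8 + M*N^5/20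
    + M*Jc*N/24 - M*Jc*N^2/6 - M*Jc*N^3/4 + M*Jc*N^4/8
    - 5*M*Jc^2*N/24 - M*Jc^2*N^2/8 + M*Jc^2*N^3/12
    + M^2*N/3 - M^2*N^2/24 + M^2*N^3/12 - M^2*N^4/8
    - M^2*Jc*N/24 + M^2*Jc*N^2/8 - M^2*Jc*N^3/4
    - M^2*Jc^2*N/8 - M^2*Jc^2*N^2/8
    + 17*M^3*N/36 - M^3*N^2/6 + M^3*N^3/9
    - M^3*Jc*N/6 + M^3*Jc*N^2/6
    + M^4*N/3 - M^4*N^2/12 - M^4*Jc*N/12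
    + M^5*N/12 ) / (M*(M+1)^2*(M+2)/12)

lemma sum_ent (M Jc : ℝ) (h0 : M ≠ 0) (h1 : M+1 ≠ 0) (h2 : M+2 ≠ 0) (N : ℕ) :
    ∑ k ∈ range N, ent M ((k:ℝ)+1) ((k:ℝ)+1+Jc) = Gfun M Jc (N:ℝ) := by
  induction N with
  | zero => norm_num [Gfun]
  | succ n ih =>
    rw [sum_range_succ, ih]
    unfold Gfun ent bb
    push_cast
    field_simp
    ring

end KmatAux

open KmatAux Finset in
theorem Kmat_superdiagonal_sum (m j : ℕ) (hj : 1 ≤ j) (hjm : j < m) :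
    (∑ r : Fin (m + 1),
        if h : 1 ≤ r.val ∧ r.val + j ≤ m then Kmat m r ⟨r.val + j, by omega⟩ else 0)
      = (((m : ℝ) - j) * ((m : ℝ) + 1 - j) * ((m : ℝ) + 2 - j) /
            ((m : ℝ) * ((m : ℝ) + 1) * ((m : ℝ) + 2))) *
          (((m : ℝ) ^ 2 + 2 * m - 3) / 15 - ((j : ℝ) ^ 2 + 3 * j * ((m : ℝ) + 1)) / 10) := by
  have hm : 1 ≤ m := by omega
  have h0 : (m:ℝ) ≠ 0 := by
    have : (0:ℝ) < m := by exact_mod_cast hm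
    linarith
  have h1 : (m:ℝ)+1 ≠ 0 := by positivity
  have h2 : (m:ℝ)+2 ≠ 0 := by positivity
  have step1 : (∑ r : Fin (m + 1),
        if h : 1 ≤ r.val ∧ r.val + j ≤ m then Kmat m r ⟨r.val + j, by omega⟩ else 0)
      = ∑ r : Fin (m + 1),
        (fun i : ℕ => if 1 ≤ i ∧ i + j ≤ m then ent (m:ℝ) (i:ℝ) ((i:ℝ)+(j:ℝ)) else 0) r.val := by
    apply Finset.sum_congr rfl
    intro r _
    dsimp only
    by_cases h : 1 ≤ r.val ∧ r.val + j ≤ m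
    · rw [dif_pos h, if_pos h, Kmat_entry m hm r ⟨r.val + j, by omega⟩ (by simp)]
      congr 1
      push_cast
      ring
    · rw [dif_neg h, if_neg h]
  rw [step1,
    Fin.sum_univ_eq_sum_range
      (fun i : ℕ => if 1 ≤ i ∧ i + j ≤ m then ent (m:ℝ) (i:ℝ) ((i:ℝ)+(j:ℝ)) else 0) (m+1),
    ← Finset.sum_filter]
  have hfil : (range (m+1)).filter (fun i => 1 ≤ i ∧ i + j ≤ m) = Finset.Ico 1 (m - j + 1) := by
    ext a
    simp only [Finset.mem_filter, Finset.mem_range, Finset.mem_Ico]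
    omega
  rw [hfil, Finset.sum_Ico_eq_sum_range]
  have hlen : m - j + 1 - 1 = m - j := by omega
  rw [hlen]
  have step3 : ∀ k ∈ range (m - j),
      ent (m:ℝ) ((1+k : ℕ):ℝ) (((1+k:ℕ):ℝ)+(j:ℝ)) = ent (m:ℝ) ((k:ℝ)+1) ((k:ℝ)+1+(j:ℝ)) := by
    intro k _
    congr 1 <;> push_cast <;> ring
  rw [Finset.sum_congr rfl step3, sum_ent (m:ℝ) (j:ℝ) h0 h1 h2 (m-j)]
  have hmj : ((m - j : ℕ):ℝ) = (m:ℝ) - (j:ℝ) := by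
    push_cast [Nat.cast_sub (le_of_lt hjm)]
    ring
  rw [hmj]
  unfold Gfun
  field_simp
  ring
end
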